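/- Let t > 0 be a real number and let q ≥ 2 be an integer with q ≥ t − 1. Let (a_m)_{m∈ℕ} be a sequence of real numbers satisfying |a_m| ≤ (1/m!)·(t/2)^m for all m. Then 2·∑_{l=0}^{∞} |a_{q+2l}| ≤ (4/(3·√π))·(e·t/(2q))^q. -/

import Mathlib

open scoped Nat

lemma sqrt_pi_le_stirling (q : ℕ) (hq : 1 ≤ q) :
    Real.sqrt Real.pi ≤ Stirling.stirlingSeq q := by
  obtain ⟨n, rfl⟩ : ∃ n, q = n + 1 := ⟨q - 1, by omega⟩
  have h : Filter.Tendsto (Stirling.stirlingSeq ∘ Nat.succ) Filter.atTop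
      (nhds (Real.sqrt Real.pi)) :=
    Stirling.tendsto_stirlingSeq_sqrt_pi.comp (Filter.tendsto_add_atTop_nat 1)
  exact Stirling.stirlingSeq'_antitone.le_of_tendsto h n

lemma fact_lb (q : ℕ) (hq : 2 ≤ q) :
    2 * Real.sqrt Real.pi * ((q : ℝ) / Real.exp 1) ^ q ≤ (q ! : ℝ) := by
  have hs := sqrt_pi_le_stirling q (by omega)
  have hqpos : (0:ℝ) < q := by exact_mod_cast (by omega : 0 < q)
  have hden : (0:ℝ) < Real.sqrt (2 * q) * ((q:ℝ) / Real.exp 1) ^ q := by positivity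
  have hdef : (q ! : ℝ) = Stirling.stirlingSeq q * (Real.sqrt (2 * q) * ((q:ℝ) / Real.exp 1) ^ q) := by
    rw [Stirling.stirlingSeq]
    field_simp
  have h2 : (2:ℝ) ≤ Real.sqrt (2 * q) := by
    have hsq := Real.sq_sqrt (by positivity : (0:ℝ) ≤ 2 * q)
    have h2q : (2:ℝ) ≤ q := by exact_mod_cast hq
    nlinarith [Real.sqrt_nonneg (2 * (q:ℝ))]
  rw [hdef]
  have hppos : (0:ℝ) < ((q:ℝ) / Real.exp 1) ^ q := by positivity
  nlinarith [Real.sqrt_nonneg Real.pi, Real.pi_pos, Real.sqrt_pos.mpr Real.pi_pos]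

theorem stmt_18 (t : ℝ) (ht : 0 < t) (q : ℕ) (hq : 2 ≤ q) (hqt : (q : ℝ) ≥ t - 1)
    (a : ℕ → ℝ) (ha : ∀ m : ℕ, |a m| ≤ (1 / (m ! : ℝ)) * (t / 2) ^ m) :
    2 * ∑' l : ℕ, |a (q + 2 * l)|
      ≤ (4 / (3 * Real.sqrt Real.pi)) * (Real.exp 1 * t / (2 * q)) ^ q := by
  have hqpos : (0:ℝ) < q := by exact_mod_cast (by omega : 0 < q)
  set c : ℝ := (1 / (q ! : ℝ)) * (t / 2) ^ q with hc
  have hcpos : 0 < c := by positivity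
  have key : ∀ l : ℕ, |a (q + 2 * l)| ≤ c * (1/4 : ℝ) ^ l := by
    intro l
    refine (ha _).trans ?_
    have hfac : (q ! : ℝ) * ((q:ℝ) + 1) ^ (2 * l) ≤ ((q + 2 * l)! : ℝ) := by
      exact_mod_cast (Nat.factorial_mul_pow_le_factorial : q ! * (q+1) ^ (2*l) ≤ (q + 2*l)!)
    have ht2 : (t/2)^2 ≤ (1/4) * ((q:ℝ) + 1)^2 := by nlinarith
    have hfpos : (0:ℝ) < (q ! : ℝ) * ((q:ℝ) + 1) ^ (2 * l) := by positivity
    calc (1 / ((q + 2*l)! : ℝ)) * (t/2) ^ (q + 2*l)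
        ≤ (1 / ((q ! : ℝ) * ((q:ℝ) + 1) ^ (2 * l))) * ((t/2)^q * ((1/4) * ((q:ℝ)+1)^2)^l) := by
          rw [pow_add, pow_mul]
          gcongr <;> first
            | positivity
            | exact hfac
            | exact pow_le_pow_left (by positivity) ht2 l
      _ = c * (1/4 : ℝ) ^ l := by
          rw [mul_pow, ← pow_mul, hc]
          field_simp
  have hsum2 : Summable (fun l : ℕ => c * (1/4 : ℝ) ^ l) :=
    (summable_geometric_of_lt_one (by norm_num) (by norm_num)).mul_left c
  have hsum1 : Summable (fun l : ℕ => |a (q + 2 * l)|) :=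
    Summable.of_nonneg_of_le (fun l => abs_nonneg _) key hsum2
  have hts : ∑' l : ℕ, |a (q + 2 * l)| ≤ c * (4/3 : ℝ) := by
    calc ∑' l : ℕ, |a (q + 2 * l)| ≤ ∑' l : ℕ, c * (1/4 : ℝ) ^ l :=
          Summable.tsum_le_tsum key hsum1 hsum2
      _ = c * (4/3 : ℝ) := by
          rw [tsum_mul_left, tsum_geometric_of_lt_one (by norm_num) (by norm_num)]
          norm_num
  refine le_trans (by linarith : 2 * ∑' l : ℕ, |a (q + 2 * l)| ≤ 2 * (c * (4/3))) ?_
  -- goal: 2 * (c * (4/3)) ≤ RHS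
  have hfq := fact_lb q hq
  have hfpos : (0:ℝ) < (q ! : ℝ) := by positivity
  have hppos : (0:ℝ) < ((q:ℝ) / Real.exp 1) ^ q := by positivity
  have hpi : (0:ℝ) < Real.sqrt Real.pi := Real.sqrt_pos.mpr Real.pi_pos
  have hrw : Real.exp 1 * t / (2 * q) = (Real.exp 1 / q) * (t / 2) := by
    field_simp
  rw [hrw, mul_pow]
  have h1 : 2 * (c * (4/3)) = (8/3) / (q ! : ℝ) * (t/2)^q := by rw [hc]; ring
  rw [h1]
  have h2 : (8/3 : ℝ) / (q ! : ℝ) ≤ 4 / (3 * Real.sqrt Real.pi) * (Real.exp 1 / q) ^ q := by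
    rw [div_le_iff₀ hfpos]
    have he : (Real.exp 1 / q) ^ q = (((q:ℝ) / Real.exp 1) ^ q)⁻¹ := by
      rw [← inv_pow, inv_div]
    rw [he]
    have := mul_le_mul_of_nonneg_left hfq (le_of_lt (by positivity :
      (0:ℝ) < 4 / (3 * Real.sqrt Real.pi) * (((q:ℝ) / Real.exp 1) ^ q)⁻¹))
    refine le_trans ?_ this
    field_simp
    norm_num
  calc (8/3 : ℝ) / (q ! : ℝ) * (t/2)^q
      ≤ (4 / (3 * Real.sqrt Real.pi) * (Real.exp 1 / q) ^ q) * (t/2)^q := by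
        gcongr
    _ = 4 / (3 * Real.sqrt Real.pi) * ((Real.exp 1 / q) ^ q * (t/2)^q) := by ring
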